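/- Fix z ∈ [k]^n and let A be a random symmetric {0,1} matrix with zero diagonal whose entries A_{ij}, 1 ≤ i < j ≤ n, are independent Bernoulli(ρ S_{z_i z_j}). For e ∈ [k]^n and a,b ∈ [k] let W_{ab}(e,z) = o_{ab}(e)/n² − E[o_{ab}(e)]/n² − o_{ab}(z)/n² + E[o_{ab}(z)]/n². Then for every x > 0, P( |W_{ab}(e,z)| > x ) ≤ 2 exp( −x n² + 6 ρ s_max d(e,z) n ), where d(e,z) = #{i : e_i ≠ z_i}. -/

import Mathlib

open Finset Filter
open scoped Classical BigOperators Topology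

noncomputable section

namespace SBM

variable {n k : ℕ}

/-- Number of nodes with label `a`. -/
def nCount (z : Fin n → Fin k) (a : Fin k) : ℕ :=
  (Finset.univ.filter fun i => z i = a).card

/-- `n_{ab}(z)`. -/
def nab (z : Fin n → Fin k) (a b : Fin k) : ℝ :=
  if a = b then (nCount z a : ℝ) * ((nCount z a : ℝ) - 1)
  else (nCount z a : ℝ) * (nCount z b : ℝ)

/-- `o_{ab}(z)`: number of (ordered) edges between communities `a` and `b`. -/
def oab (A : Fin n → Fin n → Bool) (z : Fin n → Fin k) (a b : Fin k) : ℝ :=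
  ∑ i : Fin n, ∑ j : Fin n, if z i = a ∧ z j = b ∧ A i j = true then (1 : ℝ) else 0

/-- `τ(x) = x log x + (1-x) log(1-x)` (with `Real.log 0 = 0`, so `0 log 0 = 0`). -/
def tau (x : ℝ) : ℝ := x * Real.log x + (1 - x) * Real.log (1 - x)

/-- Maximum likelihood modularity. -/
def QML (A : Fin n → Fin n → Bool) (z : Fin n → Fin k) : ℝ :=
  (1 / (2 * (n : ℝ) ^ 2)) *
    ∑ a : Fin k, ∑ b : Fin k, nab z a b * tau (oab A z a b / nab z a b)

/-- The Beta function. -/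
def Beta (x y : ℝ) : ℝ := Real.Gamma x * Real.Gamma y / Real.Gamma (x + y)

def otilde (A : Fin n → Fin n → Bool) (z : Fin n → Fin k) (a b : Fin k) : ℝ :=
  if a = b then oab A z a b / 2 else oab A z a b

def ntilde (z : Fin n → Fin k) (a b : Fin k) : ℝ :=
  if a = b then nab z a b / 2 else nab z a b

/-- Integrated conditional likelihood modularity. -/
def QICL (A : Fin n → Fin n → Bool) (z : Fin n → Fin k) : ℝ :=
  (1 / (n : ℝ) ^ 2) *
    ∑ p ∈ Finset.univ.filter (fun p : Fin k × Fin k => p.1 ≤ p.2),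
      Real.log (Beta (otilde A z p.1 p.2 + 1 / 2)
          (ntilde z p.1 p.2 - otilde A z p.1 p.2 + 1 / 2) / Beta (1 / 2) (1 / 2))

/-- The adjacency matrix is symmetric with zero diagonal. -/
def ValidAdj (A : Fin n → Fin n → Bool) : Prop :=
  (∀ i j, A i j = A j i) ∧ ∀ i, A i i = false

/-- Density of the conditional SBM edge model given the labels `z`:
independent Bernoulli(`ρ S (z i) (z j)`) edges for `i < j`. -/
def edgeDensity (ρ : ℝ) (S : Matrix (Fin k) (Fin k) ℝ) (z : Fin n → Fin k)
    (A : Fin n → Fin n → Bool) : ℝ :=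
  ∏ p ∈ Finset.univ.filter (fun p : Fin n × Fin n => p.1 < p.2),
    (if A p.1 p.2 then ρ * S (z p.1) (z p.2) else 1 - ρ * S (z p.1) (z p.2))

/-- Conditional probability of an event on the adjacency matrix, given labels `z`. -/
def condProb (ρ : ℝ) (S : Matrix (Fin k) (Fin k) ℝ) (z : Fin n → Fin k)
    (E : (Fin n → Fin n → Bool) → Prop) : ℝ :=
  ∑ A : Fin n → Fin n → Bool, if ValidAdj A ∧ E A then edgeDensity ρ S z A else 0

/-- Conditional expectation of a function of the adjacency matrix, given labels `z`. -/
def condExp (ρ : ℝ) (S : Matrix (Fin k) (Fin k) ℝ) (z : Fin n → Fin k)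
    (f : (Fin n → Fin n → Bool) → ℝ) : ℝ :=
  ∑ A : Fin n → Fin n → Bool, if ValidAdj A then edgeDensity ρ S z A * f A else 0

/-- Probability of an event under the SBM: labels are i.i.d. `π`, edges are conditionally
independent Bernoulli(`ρ S (z i) (z j)`). -/
def sbmProb (π : Fin k → ℝ) (ρ : ℝ) (S : Matrix (Fin k) (Fin k) ℝ)
    (E : (Fin n → Fin k) → (Fin n → Fin n → Bool) → Prop) : ℝ :=
  ∑ z : Fin n → Fin k, (∏ i, π (z i)) * condProb ρ S z (E z)

/-- Number of disagreements between two label vectors. -/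
def hamming (e z : Fin n → Fin k) : ℕ :=
  (Finset.univ.filter fun i => e i ≠ z i).card

/-- Misclassification distance: minimum number of disagreements over permutations of labels. -/
def mDist (e z : Fin n → Fin k) : ℕ :=
  Finset.univ.inf' ⟨Equiv.refl (Fin k), Finset.mem_univ _⟩
    (fun σ : Equiv.Perm (Fin k) => (Finset.univ.filter fun i => e i ≠ σ (z i)).card)

/-- Confusion matrix `R(e,z)`. -/
def confusion (e z : Fin n → Fin k) : Matrix (Fin k) (Fin k) ℝ :=
  Matrix.of fun a b => (1 / (n : ℝ)) * ∑ i : Fin n, if e i = a ∧ z i = b then (1 : ℝ) else 0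

/-- `[R 1]_a` : row sums. -/
def rowSum (R : Matrix (Fin k) (Fin k) ℝ) (a : Fin k) : ℝ := ∑ j, R a j

/-- `[Rᵀ 1]_a` : column sums. -/
def colSum (R : Matrix (Fin k) (Fin k) ℝ) (a : Fin k) : ℝ := ∑ i, R i a

/-- `[P_R]_{ab}`. -/
def PR (P R : Matrix (Fin k) (Fin k) ℝ) (n : ℕ) (a b : Fin k) : ℝ :=
  ((R * P * R.transpose) a b - (if a = b then (∑ i, P i i * R a i) / n else 0)) /
    (rowSum R a * (rowSum R b - if a = b then 1 / (n : ℝ) else 0))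

/-- The population modularity `H_{P,n}(R)`. -/
def Hmod (P R : Matrix (Fin k) (Fin k) ℝ) (n : ℕ) : ℝ :=
  (1 / 2) * ∑ a : Fin k, ∑ b : Fin k,
    rowSum R a * (rowSum R b - if a = b then 1 / (n : ℝ) else 0) * tau (PR P R n a b)

/-- The centered modularity `X(e,z)` (with `P = ρ S`). -/
def Xfun (ρ : ℝ) (S : Matrix (Fin k) (Fin k) ℝ) (A : Fin n → Fin n → Bool)
    (e z : Fin n → Fin k) : ℝ :=
  (1 / (2 * (n : ℝ) ^ 2)) * ∑ a : Fin k, ∑ b : Fin k,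
    nab e a b * (tau (oab A e a b / nab e a b) - tau (PR (ρ • S) (confusion e z) n a b))

/-- The limit functional `G_S(R)` (terms with `[RSRᵀ]_{ab} = 0` vanish). -/
def GS (S R : Matrix (Fin k) (Fin k) ℝ) : ℝ :=
  ∑ a : Fin k, ∑ b : Fin k,
    (R * S * R.transpose) a b *
      Real.log ((R * S * R.transpose) a b / (rowSum R a * rowSum R b))

/-- Entry-wise `ℓ¹` norm of a matrix. -/
def l1norm (M : Matrix (Fin k) (Fin k) ℝ) : ℝ := ∑ a : Fin k, ∑ b : Fin k, |M a b|

/-- `s_max`. -/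
def sMax (S : Matrix (Fin k) (Fin k) ℝ) : ℝ :=
  sSup (Set.range fun p : Fin k × Fin k => S p.1 p.2)

/-- `s_min`. -/
def sMin (S : Matrix (Fin k) (Fin k) ℝ) : ℝ :=
  sInf (Set.range fun p : Fin k × Fin k => S p.1 p.2)

/-- `H_t(p‖q) = (1-t)p + tq - p^{1-t} q^t`. -/
def Ht (t p q : ℝ) : ℝ := (1 - t) * p + t * q - p ^ (1 - t) * q ^ t

/-- `max_{t ∈ [0,1]} Σ_a π_a H_t(S_{ab} ‖ S_{ab'})`. -/
def CtMax (π : Fin k → ℝ) (S : Matrix (Fin k) (Fin k) ℝ) (b b' : Fin k) : ℝ :=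
  sSup ((fun t => ∑ a : Fin k, π a * Ht t (S a b) (S a b')) '' Set.Icc (0 : ℝ) 1)

/-- The phase-transition constant `C(π,S)`. -/
def Cconst (π : Fin k → ℝ) (S : Matrix (Fin k) (Fin k) ℝ) : ℝ :=
  sInf {x : ℝ | ∃ b b' : Fin k, b ≠ b' ∧ x = CtMax π S b b'}

/-- `K_t(p‖q) = p^{1-t} q^t + t p log(p/q) - p`. -/
def Kt (t p q : ℝ) : ℝ := p ^ (1 - t) * q ^ t + t * p * Real.log (p / q) - p

/-- `K₁(p‖q) = p log(p/q) + q - p`. -/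
def K1 (p q : ℝ) : ℝ := p * Real.log (p / q) + q - p

/-- Kullback–Leibler divergence between Bernoulli(s) and Bernoulli(t). -/
def KLBern (s t : ℝ) : ℝ := s * Real.log (s / t) + (1 - s) * Real.log ((1 - s) / (1 - t))

/-- Off-diagonal pairs of labels. -/
def offDiag (k : ℕ) : Finset (Fin k × Fin k) :=
  Finset.univ.filter fun p => p.1 ≠ p.2

/-- `C_t(R,S) = Σ_a Σ_{b ≠ b'} [Rᵀ1]_a K_t(S_{ab}‖S_{ab'}) R_{b'b}`. -/
def CtRS (t : ℝ) (R S : Matrix (Fin k) (Fin k) ℝ) : ℝ :=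
  ∑ a : Fin k, ∑ p ∈ offDiag k, colSum R a * Kt t (S a p.1) (S a p.2) * R p.2 p.1

/-- Membership in `F(n,α)`: all communities have size at least `α n`. -/
def inF (α : ℝ) (z : Fin n → Fin k) : Prop := ∀ a, α * n ≤ (nCount z a : ℝ)

/-- `zh` is a maximizer of the ML modularity over `F(n,α)`. -/
def IsMLE (α : ℝ) (A : Fin n → Fin n → Bool) (zh : Fin n → Fin k) : Prop :=
  inF α zh ∧ ∀ e : Fin n → Fin k, inF α e → QML A e ≤ QML A zh

/-- `zh` is a maximizer of the ICL modularity over `F(n,α)`. -/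
def IsICL (α : ℝ) (A : Fin n → Fin n → Bool) (zh : Fin n → Fin k) : Prop :=
  inF α zh ∧ ∀ e : Fin n → Fin k, inF α e → QICL A e ≤ QICL A zh

/-- Upper triangle index set. -/
abbrev UT (n : ℕ) := {p : Fin n × Fin n // p.1 < p.2}

def symA (B : UT n → Bool) : Fin n → Fin n → Bool := fun i j =>
  if h : i < j then B ⟨(i, j), h⟩ else if h' : j < i then B ⟨(j, i), h'⟩ else false

lemma symA_fst_snd (B : UT n → Bool) (q : UT n) : symA B q.1.1 q.1.2 = B q := by
  obtain ⟨⟨i, j⟩, h⟩ := q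
  simp [symA, h]

lemma symA_snd_fst (B : UT n → Bool) (q : UT n) : symA B q.1.2 q.1.1 = B q := by
  obtain ⟨⟨i, j⟩, h⟩ := q
  simp only [symA]
  rw [dif_neg (asymm h), dif_pos h]

lemma symA_valid (B : UT n → Bool) : ValidAdj (symA B) := by
  constructor
  · intro i j
    rcases lt_trichotomy i j with h | h | h
    · simp only [symA]; rw [dif_pos h, dif_neg (asymm h), dif_pos h]
    · subst h; rfl
    · simp only [symA]; rw [dif_neg (asymm h), dif_pos h, dif_pos h]
  · intro i; simp [symA]

lemma symA_inv (A : Fin n → Fin n → Bool) (hA : ValidAdj A) :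
    symA (fun q : UT n => A q.1.1 q.1.2) = A := by
  funext i j
  rcases lt_trichotomy i j with h | h | h
  · simp only [symA]; rw [dif_pos h]
  · subst h; simp only [symA]; rw [dif_neg (lt_irrefl i), dif_neg (lt_irrefl i)]
    exact (hA.2 i).symm
  · simp only [symA]; rw [dif_neg (asymm h), dif_pos h]
    exact hA.1 j i

lemma sum_valid (f : (Fin n → Fin n → Bool) → ℝ) :
    (∑ A : Fin n → Fin n → Bool, if ValidAdj A then f A else 0)
      = ∑ B : UT n → Bool, f (symA B) := by
  classical
  rw [← Finset.sum_filter]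
  refine Finset.sum_nbij' (i := fun A => (fun q : UT n => A q.1.1 q.1.2)) (j := symA)
    ?_ ?_ ?_ ?_ ?_
  · intro B _; exact Finset.mem_univ _
  · intro B _; simp [symA_valid B]
  · intro A hA
    simp only [Finset.mem_filter] at hA
    exact symA_inv A hA.2
  · intro B _
    funext q
    exact symA_fst_snd B q
  · intro A hA
    simp only [Finset.mem_filter] at hA
    rw [symA_inv A hA.2]


lemma sum_pairs (f : Fin n → Fin n → ℝ) (hdiag : ∀ i, f i i = 0) :
    (∑ i, ∑ j, f i j) = ∑ q : UT n, (f q.1.1 q.1.2 + f q.1.2 q.1.1) := by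
  classical
  rw [← Finset.sum_product' (f := fun i j => f i j), Finset.univ_product_univ]
  rw [← Finset.sum_filter_add_sum_filter_not (Finset.univ : Finset (Fin n × Fin n))
    (fun p => p.1 < p.2)]
  have h2 : (∑ p ∈ Finset.univ.filter (fun p : Fin n × Fin n => ¬ p.1 < p.2), f p.1 p.2)
      = ∑ p ∈ Finset.univ.filter (fun p : Fin n × Fin n => p.1 < p.2), f p.2 p.1 := by
    rw [← Finset.sum_filter_add_sum_filter_not
      (Finset.univ.filter (fun p : Fin n × Fin n => ¬ p.1 < p.2)) (fun p => p.2 < p.1)]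
    have hz : (∑ p ∈ (Finset.univ.filter (fun p : Fin n × Fin n => ¬ p.1 < p.2)).filter
        (fun p => ¬ p.2 < p.1), f p.1 p.2) = 0 := by
      refine Finset.sum_eq_zero fun p hp => ?_
      simp only [Finset.mem_filter] at hp
      have : p.1 = p.2 := le_antisymm (not_lt.mp hp.2) (not_lt.mp hp.1.2)
      rw [this]; exact hdiag p.2
    rw [hz, add_zero]
    refine Finset.sum_nbij' (i := Prod.swap) (j := Prod.swap) ?_ ?_ ?_ ?_ ?_
    · intro p hp; simp only [Finset.mem_filter] at hp ⊢
      exact ⟨Finset.mem_univ _, hp.2⟩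
    · intro p hp; simp only [Finset.mem_filter] at hp ⊢
      exact ⟨⟨Finset.mem_univ _, asymm hp.2⟩, hp.2⟩
    · intro p _; exact Prod.swap_swap p
    · intro p _; exact Prod.swap_swap p
    · intro p _; rfl
  rw [h2, ← Finset.sum_add_distrib]
  exact Finset.sum_subtype _ (fun p => by simp) _

def kap (e : Fin n → Fin k) (a b : Fin k) (q : UT n) : ℝ :=
  (if e q.1.1 = a ∧ e q.1.2 = b then 1 else 0) + (if e q.1.2 = a ∧ e q.1.1 = b then 1 else 0)

lemma oab_symA (B : UT n → Bool) (e : Fin n → Fin k) (a b : Fin k) :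
    oab (symA B) e a b = ∑ q : UT n, kap e a b q * (if B q then 1 else 0) := by
  rw [oab, sum_pairs (f := fun i j => if e i = a ∧ e j = b ∧ symA B i j = true then (1:ℝ) else 0)
    (fun i => by simp [symA])]
  refine Finset.sum_congr rfl fun q _ => ?_
  rw [symA_fst_snd, symA_snd_fst, kap]
  cases hb : B q <;> simp


def dens (ρ : ℝ) (S : Matrix (Fin k) (Fin k) ℝ) (z : Fin n → Fin k) (q : UT n) (b : Bool) : ℝ :=
  if b then ρ * S (z q.1.1) (z q.1.2) else 1 - ρ * S (z q.1.1) (z q.1.2)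

lemma edgeDensity_symA (ρ : ℝ) (S : Matrix (Fin k) (Fin k) ℝ) (z : Fin n → Fin k)
    (B : UT n → Bool) :
    edgeDensity ρ S z (symA B) = ∏ q : UT n, dens ρ S z q (B q) := by
  rw [edgeDensity, Finset.prod_subtype (p := fun p : Fin n × Fin n => p.1 < p.2)
    (Finset.univ.filter (fun p : Fin n × Fin n => p.1 < p.2))
    (fun p => by simp) (fun p => if symA B p.1 p.2 then ρ * S (z p.1) (z p.2)
      else 1 - ρ * S (z p.1) (z p.2))]
  exact Finset.prod_congr rfl fun q _ => by rw [symA_fst_snd, dens]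

lemma condProb_eq (ρ : ℝ) (S : Matrix (Fin k) (Fin k) ℝ) (z : Fin n → Fin k)
    (E : (Fin n → Fin n → Bool) → Prop) :
    condProb ρ S z E = ∑ B : UT n → Bool,
      (∏ q : UT n, dens ρ S z q (B q)) * (if E (symA B) then 1 else 0) := by
  rw [condProb]
  have h : ∀ A, (if ValidAdj A ∧ E A then edgeDensity ρ S z A else 0)
      = (if ValidAdj A then (if E A then edgeDensity ρ S z A else 0) else 0) := fun A => by
    by_cases h1 : ValidAdj A <;> by_cases h2 : E A <;> simp [h1, h2]
  simp_rw [h]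
  rw [sum_valid]
  refine Finset.sum_congr rfl fun B _ => ?_
  rw [edgeDensity_symA]
  by_cases h : E (symA B) <;> simp [h]

lemma condExp_eq (ρ : ℝ) (S : Matrix (Fin k) (Fin k) ℝ) (z : Fin n → Fin k)
    (f : (Fin n → Fin n → Bool) → ℝ) :
    condExp ρ S z f = ∑ B : UT n → Bool,
      (∏ q : UT n, dens ρ S z q (B q)) * f (symA B) := by
  rw [condExp, sum_valid (fun A => edgeDensity ρ S z A * f A)]
  exact Finset.sum_congr rfl fun B _ => by rw [edgeDensity_symA]

lemma sum_prod_bool {ι : Type*} [Fintype ι] [DecidableEq ι] (F : ι → Bool → ℝ) :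
    (∑ B : ι → Bool, ∏ i, F i (B i)) = ∏ i, (F i true + F i false) := by
  have h : (∏ i, (F i true + F i false)) = ∏ i, ∑ b : Bool, F i b :=
    Finset.prod_congr rfl fun i _ => by simp
  rw [h, Fintype.prod_sum]


lemma exp_delta (ρ : ℝ) (S : Matrix (Fin k) (Fin k) ℝ) (z : Fin n → Fin k) (q0 : UT n) :
    (∑ B : UT n → Bool, (∏ q : UT n, dens ρ S z q (B q)) * (if B q0 then (1:ℝ) else 0))
      = ρ * S (z q0.1.1) (z q0.1.2) := by
  classical
  have h1 : ∀ B : UT n → Bool,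
      (∏ q : UT n, dens ρ S z q (B q)) * (if B q0 then (1:ℝ) else 0)
        = ∏ q : UT n, (dens ρ S z q (B q) * (if q = q0 then (if B q then (1:ℝ) else 0) else 1)) := by
    intro B
    rw [Finset.prod_mul_distrib]
    congr 1
    rw [Finset.prod_ite_eq' Finset.univ q0 (fun q => if B q then (1:ℝ) else 0)]
    simp
  simp_rw [h1]
  rw [sum_prod_bool (F := fun q b => dens ρ S z q b * (if q = q0 then (if b then (1:ℝ) else 0) else 1))]
  have h2 : ∀ q : UT n,
      (dens ρ S z q true * (if q = q0 then (if true then (1:ℝ) else 0) else 1)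
        + dens ρ S z q false * (if q = q0 then (if false then (1:ℝ) else 0) else 1))
      = if q = q0 then ρ * S (z q.1.1) (z q.1.2) else 1 := by
    intro q
    by_cases h : q = q0 <;> simp [h, dens] <;> ring
  rw [Finset.prod_congr rfl (fun q _ => h2 q),
    Finset.prod_ite_eq' Finset.univ q0 (fun q => ρ * S (z q.1.1) (z q.1.2))]
  simp

lemma exp_oab (ρ : ℝ) (S : Matrix (Fin k) (Fin k) ℝ) (z e : Fin n → Fin k) (a b : Fin k) :
    condExp ρ S z (fun A' => oab A' e a b)
      = ∑ q : UT n, kap e a b q * (ρ * S (z q.1.1) (z q.1.2)) := by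
  rw [condExp_eq]
  simp_rw [oab_symA, Finset.mul_sum]
  rw [Finset.sum_comm]
  refine Finset.sum_congr rfl fun q0 _ => ?_
  rw [← exp_delta ρ S z q0, Finset.mul_sum]
  exact Finset.sum_congr rfl fun B _ => by ring


lemma bern_mgf (p c : ℝ) (hp0 : 0 ≤ p) :
    p * Real.exp (c * (1 - p)) + (1 - p) * Real.exp (c * (0 - p))
      ≤ Real.exp (p * (Real.exp c - 1 - c)) := by
  have h1 : p * Real.exp (c * (1 - p)) + (1 - p) * Real.exp (c * (0 - p))
      = Real.exp (-(c * p)) * (1 + p * (Real.exp c - 1)) := by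
    rw [show c * (1 - p) = c + -(c * p) by ring, show c * (0 - p) = -(c * p) by ring,
      Real.exp_add]
    ring
  have h2 : 1 + p * (Real.exp c - 1) ≤ Real.exp (p * (Real.exp c - 1)) := by
    linarith [Real.add_one_le_exp (p * (Real.exp c - 1))]
  calc p * Real.exp (c * (1 - p)) + (1 - p) * Real.exp (c * (0 - p))
      = Real.exp (-(c * p)) * (1 + p * (Real.exp c - 1)) := h1
    _ ≤ Real.exp (-(c * p)) * Real.exp (p * (Real.exp c - 1)) :=
        mul_le_mul_of_nonneg_left h2 (Real.exp_pos _).le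
    _ = Real.exp (p * (Real.exp c - 1 - c)) := by
        rw [← Real.exp_add]; congr 1; ring

lemma exp_sub_le_six {c : ℝ} (hc : |c| ≤ 2) : Real.exp c - 1 - c ≤ 6 := by
  obtain ⟨hc1, hc2⟩ := abs_le.mp hc
  have he2 : Real.exp 2 ≤ 9 := by
    have h := Real.exp_one_lt_d9
    have : Real.exp 2 = Real.exp 1 * Real.exp 1 := by
      rw [← Real.exp_add]; norm_num
    nlinarith [Real.exp_pos 1]
  rcases le_or_gt c 0 with h | h
  · have : Real.exp c ≤ 1 := Real.exp_le_one_iff.mpr h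
    linarith
  · have h3 : 2 - c ≤ Real.exp (2 - c) - 1 := by
      linarith [Real.add_one_le_exp (2 - c)]
    have h4 : (1:ℝ) ≤ Real.exp c := Real.one_le_exp h.le
    have h5 : Real.exp 2 - Real.exp c = Real.exp c * (Real.exp (2 - c) - 1) := by
      rw [mul_sub, ← Real.exp_add]
      norm_num
    have h6 : (2 - c) ≤ Real.exp c * (Real.exp (2 - c) - 1) := by
      calc (2 - c) ≤ Real.exp (2 - c) - 1 := h3
        _ ≤ Real.exp c * (Real.exp (2 - c) - 1) := by nlinarith
    linarith

lemma exp_nonneg' (c : ℝ) : 0 ≤ Real.exp c - 1 - c := by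
  linarith [Real.add_one_le_exp c]


lemma mgf_le (ρ : ℝ) (S : Matrix (Fin k) (Fin k) ℝ) (z : Fin n → Fin k)
    (hp0 : ∀ q : UT n, 0 ≤ ρ * S (z q.1.1) (z q.1.2))
    (hp1 : ∀ q : UT n, ρ * S (z q.1.1) (z q.1.2) ≤ 1) (c : UT n → ℝ) :
    (∑ B : UT n → Bool, (∏ q : UT n, dens ρ S z q (B q)) *
        Real.exp (∑ q : UT n, c q * ((if B q then (1:ℝ) else 0) - ρ * S (z q.1.1) (z q.1.2))))
      ≤ Real.exp (∑ q : UT n, (ρ * S (z q.1.1) (z q.1.2)) * (Real.exp (c q) - 1 - c q)) := by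
  classical
  have h1 : ∀ B : UT n → Bool,
      (∏ q : UT n, dens ρ S z q (B q)) *
        Real.exp (∑ q : UT n, c q * ((if B q then (1:ℝ) else 0) - ρ * S (z q.1.1) (z q.1.2)))
      = ∏ q : UT n, (dens ρ S z q (B q) *
          Real.exp (c q * ((if B q then (1:ℝ) else 0) - ρ * S (z q.1.1) (z q.1.2)))) := by
    intro B
    rw [Real.exp_sum, Finset.prod_mul_distrib]
  simp_rw [h1]
  rw [sum_prod_bool (F := fun q b => dens ρ S z q b *
    Real.exp (c q * ((if b then (1:ℝ) else 0) - ρ * S (z q.1.1) (z q.1.2))))]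
  calc (∏ q : UT n, (dens ρ S z q true *
          Real.exp (c q * ((if true then (1:ℝ) else 0) - ρ * S (z q.1.1) (z q.1.2)))
        + dens ρ S z q false *
          Real.exp (c q * ((if false then (1:ℝ) else 0) - ρ * S (z q.1.1) (z q.1.2)))))
      ≤ ∏ q : UT n, Real.exp ((ρ * S (z q.1.1) (z q.1.2)) * (Real.exp (c q) - 1 - c q)) := by
        refine Finset.prod_le_prod (fun q _ => ?_) (fun q _ => ?_)
        · have ha := hp0 q; have hb := hp1 q
          have hd1 : dens ρ S z q true = ρ * S (z q.1.1) (z q.1.2) := by simp [dens]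
          have hd2 : dens ρ S z q false = 1 - ρ * S (z q.1.1) (z q.1.2) := by simp [dens]
          rw [hd1, hd2]
          exact add_nonneg (mul_nonneg ha (Real.exp_pos _).le)
            (mul_nonneg (by linarith) (Real.exp_pos _).le)
        · have h := bern_mgf (ρ * S (z q.1.1) (z q.1.2)) (c q) (hp0 q)
          simpa [dens] using h
    _ = Real.exp (∑ q : UT n, (ρ * S (z q.1.1) (z q.1.2)) * (Real.exp (c q) - 1 - c q)) :=
        (Real.exp_sum _ _).symm

lemma card_T_le (e z : Fin n → Fin k) :
    (Finset.univ.filter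
        (fun q : UT n => ¬(e q.1.1 = z q.1.1 ∧ e q.1.2 = z q.1.2))).card
      ≤ hamming e z * n := by
  classical
  have hcard : ((Finset.univ.filter fun i => e i ≠ z i) ×ˢ (Finset.univ : Finset (Fin n))).card
      = hamming e z * n := by
    rw [Finset.card_product, hamming, Finset.card_univ, Fintype.card_fin]
  rw [← hcard]
  refine Finset.card_le_card_of_injOn
    (fun q => if e q.1.1 = z q.1.1 then (q.1.2, q.1.1) else (q.1.1, q.1.2)) ?_ ?_
  · intro q hq
    simp only [Finset.mem_coe, Finset.mem_filter, Finset.mem_univ, true_and] at hq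
    push_neg at hq
    by_cases h : e q.1.1 = z q.1.1
    · simp only [h, ite_true, Finset.mem_coe, Finset.mem_product, Finset.mem_filter, Finset.mem_univ,
        true_and, and_true]
      exact hq h
    · simp only [h, ite_false, Finset.mem_coe, Finset.mem_product, Finset.mem_filter, Finset.mem_univ,
        true_and, and_true]
      exact h
  · intro q1 _ q2 _ heq
    simp only at heq
    by_cases h1 : e q1.1.1 = z q1.1.1 <;> by_cases h2 : e q2.1.1 = z q2.1.1 <;>
      simp only [h1, h2, ite_true, ite_false, Prod.mk.injEq] at heq
    · exact Subtype.ext (Prod.ext heq.2 heq.1)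
    · have h3 : q1.1.1 < q1.1.2 := q1.2
      have h4 : q2.1.1 < q2.1.2 := q2.2
      rw [heq.1] at h3
      rw [← heq.2] at h4
      exact absurd (lt_trans h3 h4) (lt_irrefl _)
    · have h3 : q1.1.1 < q1.1.2 := q1.2
      have h4 : q2.1.1 < q2.1.2 := q2.2
      rw [heq.2] at h3
      rw [← heq.1] at h4
      exact absurd (lt_trans h3 h4) (lt_irrefl _)
    · exact Subtype.ext (Prod.ext heq.1 heq.2)


/-- concentration for the difference of edge counts of two labelings. -/
theorem stmt15 (n k : ℕ) (S : Matrix (Fin k) (Fin k) ℝ) (hSsym : S.IsSymm)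
    (hSpos : ∀ a b, 0 < S a b) (ρ : ℝ) (hρ0 : 0 < ρ) (hρ1 : ∀ a b, ρ * S a b < 1)
    (z e : Fin n → Fin k) (a b : Fin k) (x : ℝ) (hx : 0 < x) :
    condProb ρ S z (fun A =>
        x < |oab A e a b / (n : ℝ) ^ 2 - condExp ρ S z (fun A' => oab A' e a b) / (n : ℝ) ^ 2
              - oab A z a b / (n : ℝ) ^ 2
              + condExp ρ S z (fun A' => oab A' z a b) / (n : ℝ) ^ 2|)
      ≤ 2 * Real.exp (-(x * (n : ℝ) ^ 2) + 6 * ρ * sMax S * (hamming e z : ℝ) * n) := by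
    classical
  have hP0 : ∀ q : UT n, 0 ≤ ρ * S (z q.1.1) (z q.1.2) := fun q => (mul_pos hρ0 (hSpos _ _)).le
  have hP1 : ∀ q : UT n, ρ * S (z q.1.1) (z q.1.2) ≤ 1 := fun q => (hρ1 _ _).le
  set c : UT n → ℝ := fun q => kap e a b q - kap z a b q with hc
  have hkap : ∀ (e' : Fin n → Fin k) (q : UT n), 0 ≤ kap e' a b q ∧ kap e' a b q ≤ 2 := by
    intro e' q
    unfold kap
    constructor <;> split_ifs <;> norm_num
  have hcabs : ∀ q, |c q| ≤ 2 := by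
    intro q
    have h1 := hkap e q
    have h2 := hkap z q
    simp only [hc]
    rw [abs_le]
    constructor <;> linarith [h1.1, h1.2, h2.1, h2.2]
  have hczero : ∀ q : UT n, (e q.1.1 = z q.1.1 ∧ e q.1.2 = z q.1.2) → c q = 0 := by
    intro q ⟨h1, h2⟩
    simp only [hc, kap, h1, h2, sub_self]
  have hbdd : BddAbove (Set.range fun p : Fin k × Fin k => S p.1 p.2) :=
    Set.Finite.bddAbove (Set.finite_range _)
  have hsle : ∀ q : UT n, S (z q.1.1) (z q.1.2) ≤ sMax S := fun q =>
    le_csSup hbdd ⟨(z q.1.1, z q.1.2), rfl⟩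
  have hsM0 : 0 ≤ sMax S := le_trans (hSpos a b).le (le_csSup hbdd ⟨(a, b), rfl⟩)
  -- the exponent bound
  have hsum : ∀ c' : UT n → ℝ, (∀ q, |c' q| ≤ 2) →
      (∀ q : UT n, (e q.1.1 = z q.1.1 ∧ e q.1.2 = z q.1.2) → c' q = 0) →
      (∑ q : UT n, (ρ * S (z q.1.1) (z q.1.2)) * (Real.exp (c' q) - 1 - c' q))
        ≤ 6 * ρ * sMax S * (hamming e z : ℝ) * n := by
    intro c' habs hzero
    rw [← Finset.sum_filter_add_sum_filter_not Finset.univ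
      (fun q : UT n => ¬(e q.1.1 = z q.1.1 ∧ e q.1.2 = z q.1.2))]
    have h2 : (∑ q ∈ Finset.univ.filter
        (fun q : UT n => ¬¬(e q.1.1 = z q.1.1 ∧ e q.1.2 = z q.1.2)),
        (ρ * S (z q.1.1) (z q.1.2)) * (Real.exp (c' q) - 1 - c' q)) = 0 := by
      refine Finset.sum_eq_zero fun q hq => ?_
      simp only [Finset.mem_filter, not_not] at hq
      rw [hzero q hq.2]
      simp
    rw [h2, add_zero]
    have h3 : (∑ q ∈ Finset.univ.filter
        (fun q : UT n => ¬(e q.1.1 = z q.1.1 ∧ e q.1.2 = z q.1.2)),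
        (ρ * S (z q.1.1) (z q.1.2)) * (Real.exp (c' q) - 1 - c' q))
        ≤ (Finset.univ.filter
            (fun q : UT n => ¬(e q.1.1 = z q.1.1 ∧ e q.1.2 = z q.1.2))).card
          • (ρ * sMax S * 6) := by
      refine Finset.sum_le_card_nsmul _ _ _ fun q _ => ?_
      have hle1 : ρ * S (z q.1.1) (z q.1.2) ≤ ρ * sMax S :=
        mul_le_mul_of_nonneg_left (hsle q) hρ0.le
      exact mul_le_mul hle1 (exp_sub_le_six (habs q)) (exp_nonneg' _)
        (mul_nonneg hρ0.le hsM0)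
    refine le_trans h3 ?_
    rw [nsmul_eq_mul]
    have hcard := card_T_le e z
    have hcard' : ((Finset.univ.filter
        (fun q : UT n => ¬(e q.1.1 = z q.1.1 ∧ e q.1.2 = z q.1.2))).card : ℝ)
        ≤ (hamming e z : ℝ) * n := by
      have : ((Finset.univ.filter
          (fun q : UT n => ¬(e q.1.1 = z q.1.1 ∧ e q.1.2 = z q.1.2))).card : ℝ)
          ≤ ((hamming e z * n : ℕ) : ℝ) := Nat.cast_le.mpr hcard
      simpa using this
    calc ((Finset.univ.filter
          (fun q : UT n => ¬(e q.1.1 = z q.1.1 ∧ e q.1.2 = z q.1.2))).card : ℝ)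
          * (ρ * sMax S * 6)
        ≤ ((hamming e z : ℝ) * n) * (ρ * sMax S * 6) := by
          apply mul_le_mul_of_nonneg_right hcard'
          positivity
      _ = 6 * ρ * sMax S * (hamming e z : ℝ) * n := by ring
  -- main computation
  rw [condProb_eq]
  set X : (UT n → Bool) → ℝ := fun B =>
    ∑ q : UT n, c q * ((if B q then (1:ℝ) else 0) - ρ * S (z q.1.1) (z q.1.2)) with hX
  set t : ℝ := x * (n : ℝ) ^ 2 with ht
  have key : ∀ B : UT n → Bool,
      (x < |oab (symA B) e a b / (n : ℝ) ^ 2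
          - condExp ρ S z (fun A' => oab A' e a b) / (n : ℝ) ^ 2
          - oab (symA B) z a b / (n : ℝ) ^ 2
          + condExp ρ S z (fun A' => oab A' z a b) / (n : ℝ) ^ 2|) → t < |X B| := by
    intro B hB
    rcases Nat.eq_zero_or_pos n with hn | hn
    · exfalso
      subst hn
      norm_num at hB
      linarith
    · have hn2 : (0:ℝ) < (n : ℝ) ^ 2 := by positivity
      have hXeq : oab (symA B) e a b - condExp ρ S z (fun A' => oab A' e a b)
          - oab (symA B) z a b + condExp ρ S z (fun A' => oab A' z a b) = X B := by
        rw [oab_symA, oab_symA, exp_oab, exp_oab]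
        simp only [hX, hc]
        rw [← Finset.sum_sub_distrib, ← Finset.sum_sub_distrib, ← Finset.sum_add_distrib]
        exact Finset.sum_congr rfl fun q _ => by ring
      have hdiv : oab (symA B) e a b / (n : ℝ) ^ 2
          - condExp ρ S z (fun A' => oab A' e a b) / (n : ℝ) ^ 2
          - oab (symA B) z a b / (n : ℝ) ^ 2
          + condExp ρ S z (fun A' => oab A' z a b) / (n : ℝ) ^ 2
          = (oab (symA B) e a b - condExp ρ S z (fun A' => oab A' e a b)
            - oab (symA B) z a b + condExp ρ S z (fun A' => oab A' z a b)) / (n : ℝ) ^ 2 := by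
        ring
      rw [hdiv, hXeq, abs_div, abs_of_pos hn2] at hB
      rw [ht]
      exact (lt_div_iff₀ hn2).mp hB
  have hwnn : ∀ B : UT n → Bool, 0 ≤ ∏ q : UT n, dens ρ S z q (B q) := by
    intro B
    refine Finset.prod_nonneg fun q _ => ?_
    cases hb : B q
    · have : dens ρ S z q false = 1 - ρ * S (z q.1.1) (z q.1.2) := by simp [dens]
      rw [this]
      linarith [hP1 q]
    · have : dens ρ S z q true = ρ * S (z q.1.1) (z q.1.2) := by simp [dens]
      rw [this]
      exact hP0 q
  have hind : ∀ B : UT n → Bool,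
      (if x < |oab (symA B) e a b / (n : ℝ) ^ 2
          - condExp ρ S z (fun A' => oab A' e a b) / (n : ℝ) ^ 2
          - oab (symA B) z a b / (n : ℝ) ^ 2
          + condExp ρ S z (fun A' => oab A' z a b) / (n : ℝ) ^ 2| then (1:ℝ) else 0)
        ≤ Real.exp (-t) * (Real.exp (X B) + Real.exp (-(X B))) := by
    intro B
    have hsplit : Real.exp (-t) * (Real.exp (X B) + Real.exp (-(X B)))
        = Real.exp (X B - t) + Real.exp (-(X B) - t) := by
      rw [mul_add, ← Real.exp_add, ← Real.exp_add]
      ring_nf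
    split_ifs with h
    · have hXb := key B h
      rw [hsplit]
      rcases lt_abs.mp hXb with h' | h'
      · have := Real.add_one_le_exp (X B - t)
        have := (Real.exp_pos (-(X B) - t)).le
        linarith
      · have := Real.add_one_le_exp (-(X B) - t)
        have := (Real.exp_pos (X B - t)).le
        linarith
    · positivity
  calc (∑ B : UT n → Bool, (∏ q : UT n, dens ρ S z q (B q)) *
        (if x < |oab (symA B) e a b / (n : ℝ) ^ 2
            - condExp ρ S z (fun A' => oab A' e a b) / (n : ℝ) ^ 2
            - oab (symA B) z a b / (n : ℝ) ^ 2
            + condExp ρ S z (fun A' => oab A' z a b) / (n : ℝ) ^ 2| then (1:ℝ) else 0))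
      ≤ ∑ B : UT n → Bool, (∏ q : UT n, dens ρ S z q (B q)) *
          (Real.exp (-t) * (Real.exp (X B) + Real.exp (-(X B)))) := by
        refine Finset.sum_le_sum fun B _ => ?_
        exact mul_le_mul_of_nonneg_left (hind B) (hwnn B)
    _ = Real.exp (-t) * ((∑ B : UT n → Bool, (∏ q : UT n, dens ρ S z q (B q)) * Real.exp (X B))
          + (∑ B : UT n → Bool, (∏ q : UT n, dens ρ S z q (B q)) * Real.exp (-(X B)))) := by
        rw [← Finset.sum_add_distrib, Finset.mul_sum]
        exact Finset.sum_congr rfl fun B _ => by ring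
    _ ≤ Real.exp (-t) * (Real.exp (6 * ρ * sMax S * (hamming e z : ℝ) * n)
          + Real.exp (6 * ρ * sMax S * (hamming e z : ℝ) * n)) := by
        refine mul_le_mul_of_nonneg_left (add_le_add ?_ ?_) (Real.exp_pos _).le
        · refine le_trans (mgf_le ρ S z hP0 hP1 c) (Real.exp_le_exp.mpr ?_)
          exact hsum c hcabs hczero
        · have hneg : ∀ B : UT n → Bool, -(X B)
              = ∑ q : UT n, (-(c q)) * ((if B q then (1:ℝ) else 0)
                  - ρ * S (z q.1.1) (z q.1.2)) := by
            intro B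
            simp only [hX]
            rw [← Finset.sum_neg_distrib]
            exact Finset.sum_congr rfl fun q _ => by ring
          simp_rw [hneg]
          refine le_trans (mgf_le ρ S z hP0 hP1 (fun q => -(c q)))
            (Real.exp_le_exp.mpr ?_)
          refine hsum (fun q => -(c q)) (fun q => ?_) (fun q hq => ?_)
          · show |-(c q)| ≤ 2
            rw [abs_neg]; exact hcabs q
          · show -(c q) = 0
            rw [hczero q hq, neg_zero]
    _ = 2 * Real.exp (-(x * (n : ℝ) ^ 2) + 6 * ρ * sMax S * (hamming e z : ℝ) * n) := by
        have hh : Real.exp (-t) * Real.exp (6 * ρ * sMax S * (hamming e z : ℝ) * n)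
            = Real.exp (-(x * (n : ℝ) ^ 2) + 6 * ρ * sMax S * (hamming e z : ℝ) * n) := by
          rw [← Real.exp_add, ht]
        rw [← hh]
        ring


end SBM
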